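/- Let φ, θ₀₀, θ₁₁, α₁, α₂, γ ∈ ℝ, let a ≥ 0 be real and b ∈ ℂ with a² + |b|² = 1. Define the unitaries V := [[a, b], [−conj(b), a]] and U := e^{iα₁σ_z} e^{iγσ_y} e^{iα₂σ_z} on ℂ², and let F be the operator on ℂ² ⊗ ℂ² diagonal in the computational basis with diagonal (e^{iθ₀₀}, 1, 1, e^{iθ₁₁}). If (V ⊗ V) F = C_φ (U ⊗ U) C_φ, then e^{i(θ₀₀+θ₁₁)} = e^{2iφ}, and, letting s ∈ {+1, −1} be such that e^{i(θ₀₀+θ₁₁)/2} = s e^{iφ}, and setting δ := (θ₀₀ − θ₁₁)/2 and χ := 2(α₁ + α₂) − φ, one has a²(1 + cos φ cos δ) = cos²γ (1 + s cos φ cos χ) and a² sin φ cos δ = s cos²γ sin φ cos χ. -/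

import Mathlib

open Kronecker Matrix

noncomputable section

/-- The Pauli matrix σ_y. -/
def sigmaY : Matrix (Fin 2) (Fin 2) ℂ := !![0, -Complex.I; Complex.I, 0]

/-- The Pauli matrix σ_z. -/
def sigmaZ : Matrix (Fin 2) (Fin 2) ℂ := !![1, 0; 0, -1]

/-- The controlled-phase gate `C_φ` on `ℂ² ⊗ ℂ²`:
`C_φ (|a⟩⊗|b⟩) = e^{iφab} |a⟩⊗|b⟩`. -/
def Cphase (φ : ℝ) : Matrix (Fin 2 × Fin 2) (Fin 2 × Fin 2) ℂ :=
  Matrix.diagonal fun p => Complex.exp (Complex.I * (φ : ℂ) * (p.1.val : ℂ) * (p.2.val : ℂ))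

lemma expZaux (α : ℝ) : NormedSpace.exp ((Complex.I * (α:ℂ)) • sigmaZ)
    = !![Complex.exp (Complex.I * α), 0; 0, Complex.exp (-(Complex.I * α))] := by
  have h1 : (Complex.I * (α:ℂ)) • sigmaZ = Matrix.diagonal ![Complex.I * α, -(Complex.I * α)] := by
    ext i j; fin_cases i <;> fin_cases j <;> simp [sigmaZ, Matrix.diagonal]
  rw [h1, Matrix.exp_diagonal]
  ext i j; fin_cases i <;> fin_cases j <;>
    simp [Matrix.diagonal, ← Complex.exp_eq_exp_ℂ, Pi.exp_def]

lemma expYaux (γ : ℝ) : NormedSpace.exp ((Complex.I * (γ:ℂ)) • sigmaY)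
    = !![(Real.cos γ : ℂ), (Real.sin γ : ℂ); -(Real.sin γ : ℂ), (Real.cos γ : ℂ)] := by
  set P : Matrix (Fin 2) (Fin 2) ℂ := !![1, 1; Complex.I, -Complex.I] with hP
  set Q : Matrix (Fin 2) (Fin 2) ℂ := !![1/2, -Complex.I/2; 1/2, Complex.I/2] with hQ
  have hD : (Matrix.diagonal ![Complex.I*γ, -(Complex.I*γ)]) = !![Complex.I*γ, 0; 0, -(Complex.I*γ)] := by
    ext i j; fin_cases i <;> fin_cases j <;> simp [Matrix.diagonal_apply]
  have hPQ : P * Q = 1 := by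
    ext i j; fin_cases i <;> fin_cases j <;>
      simp [hP, hQ, Matrix.mul_apply, Fin.sum_univ_two, Matrix.one_apply] <;> ring_nf <;>
      simp [Complex.I_sq]
  have hPinv : P⁻¹ = Q := Matrix.inv_eq_right_inv hPQ
  have hunit : IsUnit P := by
    have : Invertible P := invertibleOfRightInverse _ _ hPQ
    exact isUnit_of_invertible P
  have key : (Complex.I * (γ:ℂ)) • sigmaY = P * Matrix.diagonal ![Complex.I*γ, -(Complex.I*γ)] * P⁻¹ := by
    rw [hPinv, hD]
    ext i j; fin_cases i <;> fin_cases j <;>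
      simp [hP, hQ, sigmaY, Matrix.mul_apply, Fin.sum_univ_two] <;> ring_nf <;>
      simp [Complex.I_sq] <;> ring
  rw [key, Matrix.exp_conj P (Matrix.diagonal ![Complex.I*γ, -(Complex.I*γ)]) hunit,
    Matrix.exp_diagonal, hPinv]
  have hc : (Real.cos γ : ℂ) = Complex.cos γ := by simp
  have hs : (Real.sin γ : ℂ) = Complex.sin γ := by simp
  have hD2 : Matrix.diagonal (NormedSpace.exp ![Complex.I*γ, -(Complex.I*γ)])
      = !![Complex.exp (Complex.I*γ), 0; 0, Complex.exp (-(Complex.I*γ))] := by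
    ext i j; fin_cases i <;> fin_cases j <;>
      simp [Matrix.diagonal_apply, ← Complex.exp_eq_exp_ℂ, Pi.exp_def]
  rw [hD2]
  ext i j; fin_cases i <;> fin_cases j <;>
    simp [hP, hQ, Matrix.mul_apply, Fin.sum_univ_two, hc, hs, Complex.cos, Complex.sin] <;>
    ring_nf <;> simp [Complex.I_sq] <;> ring

/-- determinant and trace constraints relating the two factorisations
`(V ⊗ V) F = C_φ (U ⊗ U) C_φ` of the gate `G`. -/
theorem statement12 (φ θ00 θ11 α₁ α₂ γ : ℝ) (a : ℝ) (ha : 0 ≤ a) (b : ℂ)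
    (hab : a ^ 2 + ‖b‖ ^ 2 = 1)
    (V : Matrix (Fin 2) (Fin 2) ℂ) (hV : V = !![(a : ℂ), b; -(starRingEnd ℂ) b, (a : ℂ)])
    (U : Matrix (Fin 2) (Fin 2) ℂ)
    (hU : U = NormedSpace.exp ((Complex.I * (α₁ : ℂ)) • sigmaZ) *
              NormedSpace.exp ((Complex.I * (γ : ℂ)) • sigmaY) *
              NormedSpace.exp ((Complex.I * (α₂ : ℂ)) • sigmaZ))
    (F : Matrix (Fin 2 × Fin 2) (Fin 2 × Fin 2) ℂ)
    (hF : F = Matrix.diagonal fun p =>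
      if p = ((0 : Fin 2), (0 : Fin 2)) then Complex.exp (Complex.I * (θ00 : ℂ))
      else if p = ((1 : Fin 2), (1 : Fin 2)) then Complex.exp (Complex.I * (θ11 : ℂ)) else 1)
    (h : (V ⊗ₖ V) * F = Cphase φ * (U ⊗ₖ U) * Cphase φ) :
    Complex.exp (Complex.I * ((θ00 : ℂ) + (θ11 : ℂ))) = Complex.exp (2 * Complex.I * (φ : ℂ)) ∧
    ∀ s : ℝ, (s = 1 ∨ s = -1) →
      Complex.exp (Complex.I * (((θ00 : ℂ) + (θ11 : ℂ)) / 2)) = (s : ℂ) * Complex.exp (Complex.I * (φ : ℂ)) →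
      (a ^ 2 * (1 + Real.cos φ * Real.cos ((θ00 - θ11) / 2)) =
        Real.cos γ ^ 2 * (1 + s * Real.cos φ * Real.cos (2 * (α₁ + α₂) - φ)) ∧
       a ^ 2 * Real.sin φ * Real.cos ((θ00 - θ11) / 2) =
        s * Real.cos γ ^ 2 * Real.sin φ * Real.cos (2 * (α₁ + α₂) - φ)) := by
  -- explicit form of U
  have hUex : U = !![Complex.exp (Complex.I*α₁)*(Real.cos γ:ℂ)*Complex.exp (Complex.I*α₂),
        Complex.exp (Complex.I*α₁)*(Real.sin γ:ℂ)*Complex.exp (-(Complex.I*α₂));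
        -(Complex.exp (-(Complex.I*α₁))*(Real.sin γ:ℂ)*Complex.exp (Complex.I*α₂)),
        Complex.exp (-(Complex.I*α₁))*(Real.cos γ:ℂ)*Complex.exp (-(Complex.I*α₂))] := by
    rw [hU, expZaux, expYaux, expZaux]
    ext i j; fin_cases i <;> fin_cases j <;>
      simp [Matrix.mul_apply, Fin.sum_univ_two] <;> ring
  have hU00 : U 0 0 = Complex.exp (Complex.I * ((α₁:ℂ) + α₂)) * (Real.cos γ : ℂ) := by
    rw [hUex]; simp
    rw [show Complex.I * ((α₁:ℂ) + α₂) = Complex.I*α₁ + Complex.I*α₂ from by ring,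
      Complex.exp_add]
    ring
  have hU11 : U 1 1 = Complex.exp (-(Complex.I * ((α₁:ℂ) + α₂))) * (Real.cos γ : ℂ) := by
    rw [hUex]; simp
    rw [show -(Complex.I * ((α₁:ℂ) + α₂)) = -(Complex.I*α₁) + -(Complex.I*α₂) from by ring,
      Complex.exp_add]
    ring
  -- determinant part
  have hdetV : V.det = 1 := by
    rw [hV, Matrix.det_fin_two_of]
    have hb : b * (starRingEnd ℂ) b = ((‖b‖ ^ 2 : ℝ) : ℂ) := by
      rw [Complex.mul_conj, ← Complex.sq_norm]
    have : (a:ℂ) * a - b * -(starRingEnd ℂ) b = ((a^2 + ‖b‖ ^2 : ℝ) : ℂ) := by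
      rw [mul_neg, sub_neg_eq_add, hb]; push_cast; ring
    rw [this, hab]; simp
  have hdetU : U.det = 1 := by
    rw [hUex, Matrix.det_fin_two_of]
    have h1 : Complex.exp (Complex.I*α₁)*Complex.exp (-(Complex.I*α₁)) = 1 := by
      rw [← Complex.exp_add]; simp
    have h2 : Complex.exp (Complex.I*α₂)*Complex.exp (-(Complex.I*α₂)) = 1 := by
      rw [← Complex.exp_add]; simp
    have h3 : ((Real.cos γ:ℂ))^2 + ((Real.sin γ:ℂ))^2 = 1 := by
      push_cast [← Complex.ofReal_pow]
      exact_mod_cast Real.cos_sq_add_sin_sq γ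
    calc Complex.exp (Complex.I*α₁)*(Real.cos γ:ℂ)*Complex.exp (Complex.I*α₂) *
          (Complex.exp (-(Complex.I*α₁))*(Real.cos γ:ℂ)*Complex.exp (-(Complex.I*α₂))) -
          Complex.exp (Complex.I*α₁)*(Real.sin γ:ℂ)*Complex.exp (-(Complex.I*α₂)) *
          -(Complex.exp (-(Complex.I*α₁))*(Real.sin γ:ℂ)*Complex.exp (Complex.I*α₂))
        = (Complex.exp (Complex.I*α₁)*Complex.exp (-(Complex.I*α₁))) *
          (Complex.exp (Complex.I*α₂)*Complex.exp (-(Complex.I*α₂))) *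
          (((Real.cos γ:ℂ))^2 + ((Real.sin γ:ℂ))^2) := by ring
      _ = 1 := by rw [h1, h2, h3]; ring
  have hdetF : F.det = Complex.exp (Complex.I * ((θ00 : ℂ) + (θ11 : ℂ))) := by
    rw [hF, Matrix.det_diagonal, Fintype.prod_prod_type]
    simp [Fin.prod_univ_two, ← Complex.exp_add]
    ring_nf
  have hdetC : (Cphase φ).det = Complex.exp (Complex.I * (φ : ℂ)) := by
    rw [Cphase, Matrix.det_diagonal, Fintype.prod_prod_type]
    simp [Fin.prod_univ_two]
  have hd := congrArg Matrix.det h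
  rw [Matrix.det_mul, Matrix.det_mul, Matrix.det_mul, Matrix.det_kronecker, Matrix.det_kronecker,
    hdetV, hdetF, hdetC, hdetU] at hd
  simp only [one_pow, one_mul, mul_one] at hd
  refine ⟨by rw [hd, ← Complex.exp_add]; congr 1; ring, ?_⟩
  -- entries part
  intro s hs hsq
  have happ := fun i j => (Matrix.ext_iff.2 h) i j
  have E1 := happ (0,0) (0,0)
  have E2 := happ (1,1) (1,1)
  have E3 := happ (0,1) (0,1)
  rw [hF, Cphase, Matrix.mul_diagonal, Matrix.mul_diagonal, Matrix.diagonal_mul] at E1 E2 E3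
  simp only [Matrix.kroneckerMap_apply, hV] at E1 E2 E3
  norm_num [hU00, hU11] at E1 E2 E3
  -- a² = cos²γ
  have hac : a^2 = Real.cos γ ^ 2 := by
    have E3' : ((a^2 : ℝ) : ℂ) = ((Real.cos γ ^ 2 : ℝ) : ℂ) := by
      push_cast
      rw [pow_two, pow_two, E3]
      rw [show Complex.exp (Complex.I * (↑α₁ + ↑α₂)) * Complex.cos ↑γ *
            (Complex.exp (-(Complex.I * (↑α₁ + ↑α₂))) * Complex.cos ↑γ)
          = Complex.exp (Complex.I * (↑α₁ + ↑α₂) + -(Complex.I * (↑α₁ + ↑α₂))) *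
            (Complex.cos ↑γ * Complex.cos ↑γ) from by rw [Complex.exp_add]; ring]
      simp
    exact_mod_cast E3'
  -- split the phases
  set δ : ℝ := (θ00 - θ11)/2 with hδ
  set χ : ℝ := 2*(α₁+α₂) - φ with hχ
  have hsplit00 : Complex.exp (Complex.I * θ00)
      = Complex.exp (Complex.I * (((θ00:ℂ) + θ11)/2)) * Complex.exp (Complex.I * (δ:ℂ)) := by
    rw [← Complex.exp_add]; congr 1; rw [hδ]; push_cast; ring
  have hsplit11 : Complex.exp (Complex.I * θ11)
      = Complex.exp (Complex.I * (((θ00:ℂ) + θ11)/2)) * Complex.exp (-(Complex.I * (δ:ℂ))) := by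
    rw [← Complex.exp_add]; congr 1; rw [hδ]; push_cast; ring
  have hA1 : Complex.exp (Complex.I * ((α₁:ℂ) + α₂)) * Complex.exp (Complex.I * ((α₁:ℂ) + α₂))
      = Complex.exp (Complex.I * φ) * Complex.exp (Complex.I * (χ:ℂ)) := by
    rw [← Complex.exp_add, ← Complex.exp_add]; congr 1; rw [hχ]; push_cast; ring
  have hA2 : Complex.exp (Complex.I * (φ:ℂ)) *
        (Complex.exp (-(Complex.I * ((α₁:ℂ) + α₂))) * Complex.exp (-(Complex.I * ((α₁:ℂ) + α₂)))) *
        Complex.exp (Complex.I * (φ:ℂ))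
      = Complex.exp (Complex.I * φ) * Complex.exp (-(Complex.I * (χ:ℂ))) := by
    rw [← Complex.exp_add, ← Complex.exp_add, ← Complex.exp_add, ← Complex.exp_add]
    congr 1; rw [hχ]; push_cast; ring
  -- sum the diagonal corner entries
  have hsum : Complex.exp (Complex.I * φ) * (((s:ℂ) * (a:ℂ)^2) * (2 * ((Real.cos δ : ℝ):ℂ)))
      = Complex.exp (Complex.I * φ) * ((Real.cos γ:ℂ)^2 * (2 * ((Real.cos χ : ℝ):ℂ))) := by
    have c1 : Complex.exp (Complex.I * (δ:ℂ)) + Complex.exp (-(Complex.I * (δ:ℂ)))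
        = 2 * ((Real.cos δ : ℝ):ℂ) := by
      rw [Complex.ofReal_cos, Complex.cos, mul_comm Complex.I (δ:ℂ)]; ring
    have c2 : Complex.exp (Complex.I * (χ:ℂ)) + Complex.exp (-(Complex.I * (χ:ℂ)))
        = 2 * ((Real.cos χ : ℝ):ℂ) := by
      rw [Complex.ofReal_cos, Complex.cos, mul_comm Complex.I (χ:ℂ)]; ring
    have hcos : Complex.cos (γ:ℂ) = ((Real.cos γ : ℝ):ℂ) := (Complex.ofReal_cos γ).symm
    calc Complex.exp (Complex.I * φ) * (((s:ℂ) * (a:ℂ)^2) * (2 * ((Real.cos δ : ℝ):ℂ)))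
        = (a:ℂ) * (a:ℂ) * (Complex.exp (Complex.I * (((θ00:ℂ) + θ11)/2)) *
            (Complex.exp (Complex.I * (δ:ℂ)) + Complex.exp (-(Complex.I * (δ:ℂ))))) := by
          rw [c1, hsq]; ring
      _ = (a:ℂ) * (a:ℂ) * Complex.exp (Complex.I * θ00)
          + (a:ℂ) * (a:ℂ) * Complex.exp (Complex.I * θ11) := by
          rw [hsplit00, hsplit11]; ring
      _ = Complex.exp (Complex.I * ((α₁:ℂ) + α₂)) * Complex.cos ↑γ *
            (Complex.exp (Complex.I * (↑α₁ + ↑α₂)) * Complex.cos ↑γ)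
          + Complex.exp (Complex.I * ↑φ) *
            (Complex.exp (-(Complex.I * (↑α₁ + ↑α₂))) * Complex.cos ↑γ *
              (Complex.exp (-(Complex.I * (↑α₁ + ↑α₂))) * Complex.cos ↑γ)) *
            Complex.exp (Complex.I * ↑φ) := by rw [E1, E2]
      _ = Complex.exp (Complex.I * ((α₁:ℂ) + α₂)) * Complex.exp (Complex.I * ((α₁:ℂ) + α₂)) *
            (Complex.cos ↑γ * Complex.cos ↑γ)
          + Complex.exp (Complex.I * (φ:ℂ)) *
            (Complex.exp (-(Complex.I * ((α₁:ℂ) + α₂))) * Complex.exp (-(Complex.I * ((α₁:ℂ) + α₂)))) *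
            Complex.exp (Complex.I * (φ:ℂ)) * (Complex.cos ↑γ * Complex.cos ↑γ) := by ring
      _ = Complex.exp (Complex.I * φ) * ((Real.cos γ:ℂ)^2 * (2 * ((Real.cos χ : ℝ):ℂ))) := by
          rw [hA1, hA2, ← c2, hcos]; ring
  have hkeyC : ((s * a^2 * Real.cos δ : ℝ):ℂ) = ((Real.cos γ^2 * Real.cos χ : ℝ):ℂ) := by
    have := mul_left_cancel₀ (Complex.exp_ne_zero (Complex.I * φ)) hsum
    push_cast at this ⊢
    linear_combination this / 2
  have hkeyR : s * a^2 * Real.cos δ = Real.cos γ^2 * Real.cos χ := by exact_mod_cast hkeyC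
  have hs2 : s^2 = 1 := by rcases hs with rfl | rfl <;> norm_num
  constructor
  · rcases hs with rfl | rfl
    · linear_combination hac + Real.cos φ * hkeyR
    · linear_combination hac - Real.cos φ * hkeyR
  · rcases hs with rfl | rfl
    · linear_combination Real.sin φ * hkeyR
    · linear_combination (-(Real.sin φ)) * hkeyR

end
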